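/- Let X be a complex Banach space and T ∈ B(X). The following statements are equivalent: (i) there exists S ∈ B(X) such that TST = ST², S²T = S and TST − T is quasi-nilpotent; (ii) there exists a projection P ∈ B(X) such that TP = PT, T + P is left invertible, and TP is quasi-nilpotent; (iii) there exist two closed subspaces M and N reducing T such that T|_M is left invertible (as an operator on M) and T|_N is quasi-nilpotent (as an operator on N). -/

import Mathlib

open Filter Topology NNReal ENNReal

/-- A bounded operator is quasi-nilpotent: `‖Qⁿ‖^{1/n} → 0`. -/
def IsQuasinilpotentOp {E : Type*} [NormedAddCommGroup E] [NormedSpace ℂ E]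
    (Q : E →L[ℂ] E) : Prop :=
  Tendsto (fun n : ℕ => ‖Q ^ n‖ ^ ((1 : ℝ) / n)) atTop (𝓝 0)

/-- Transfer quasinilpotence along norm bounds `‖A^n‖ ≤ C * ‖B^n‖` (for `n ≥ 1`). -/
lemma isQuasinilpotentOp_of_norm_le {E F : Type*} [NormedAddCommGroup E] [NormedSpace ℂ E]
    [NormedAddCommGroup F] [NormedSpace ℂ F] {A : E →L[ℂ] E} {B : F →L[ℂ] F}
    (C : ℝ) (h : ∀ n : ℕ, 1 ≤ n → ‖A ^ n‖ ≤ C * ‖B ^ n‖)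
    (hB : IsQuasinilpotentOp B) : IsQuasinilpotentOp A := by
  set D := max C 1 with hDdef
  have hD1 : (1 : ℝ) ≤ D := le_max_right _ _
  have hD0 : (0 : ℝ) ≤ D := zero_le_one.trans hD1
  have key : ∀ n : ℕ, 1 ≤ n → ‖A ^ n‖ ^ ((1 : ℝ) / n) ≤ D * ‖B ^ n‖ ^ ((1 : ℝ) / n) := by
    intro n hn
    have hnpos : (0 : ℝ) < n := by exact_mod_cast hn
    have hn0 : (0 : ℝ) ≤ 1 / n := by positivity
    have h1 : ‖A ^ n‖ ≤ D * ‖B ^ n‖ :=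
      (h n hn).trans (mul_le_mul_of_nonneg_right (le_max_left _ _) (norm_nonneg _))
    calc ‖A ^ n‖ ^ ((1 : ℝ) / n) ≤ (D * ‖B ^ n‖) ^ ((1 : ℝ) / n) :=
          Real.rpow_le_rpow (norm_nonneg _) h1 hn0
      _ = D ^ ((1 : ℝ) / n) * ‖B ^ n‖ ^ ((1 : ℝ) / n) := Real.mul_rpow hD0 (norm_nonneg _)
      _ ≤ D * ‖B ^ n‖ ^ ((1 : ℝ) / n) := by
          refine mul_le_mul_of_nonneg_right ?_ (Real.rpow_nonneg (norm_nonneg _) _)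
          calc D ^ ((1 : ℝ) / n) ≤ D ^ (1 : ℝ) :=
                Real.rpow_le_rpow_of_exponent_le hD1
                  (by rw [div_le_one hnpos]; exact_mod_cast hn)
            _ = D := Real.rpow_one D
  have hlim : Tendsto (fun n : ℕ => D * ‖B ^ n‖ ^ ((1 : ℝ) / n)) atTop (𝓝 0) := by
    simpa using hB.const_mul D
  refine squeeze_zero' ?_ ?_ hlim
  · exact Filter.eventually_atTop.mpr ⟨1, fun n _ => Real.rpow_nonneg (norm_nonneg _) _⟩
  · exact Filter.eventually_atTop.mpr ⟨1, fun n hn => key n hn⟩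

/-- A quasinilpotent operator has `1 + Q` invertible. -/
lemma isUnit_one_add_of_quasinilpotent {E : Type*} [NormedAddCommGroup E] [NormedSpace ℂ E]
    [CompleteSpace E] (Q : E →L[ℂ] E) (hQ : IsQuasinilpotentOp Q) :
    IsUnit ((1 : E →L[ℂ] E) + Q) := by
  have h2' : Tendsto (fun n : ℕ => (‖Q ^ n‖₊ : ℝ≥0) ^ ((1 : ℝ) / n)) atTop (𝓝 0) := by
    rw [← NNReal.tendsto_coe]
    refine Tendsto.congr (fun n => ?_) hQ
    rw [NNReal.coe_rpow, coe_nnnorm]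
  have h2 : Tendsto (fun n : ℕ => (‖Q ^ n‖₊ : ℝ≥0∞) ^ ((1 : ℝ) / n)) atTop (𝓝 0) := by
    have h3 := ENNReal.tendsto_coe.mpr h2'
    rw [ENNReal.coe_zero] at h3
    have heq : (fun n : ℕ => (‖Q ^ n‖₊ : ℝ≥0∞) ^ ((1 : ℝ) / n)) =
        fun n : ℕ => ((‖Q ^ n‖₊ ^ ((1 : ℝ) / n) : ℝ≥0) : ℝ≥0∞) :=
      funext fun n => (ENNReal.coe_rpow_of_nonneg _ (by positivity : (0:ℝ) ≤ 1 / n)).symm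
    rw [heq]
    exact h3
  have hrad : spectralRadius ℂ Q = 0 :=
    tendsto_nhds_unique (spectrum.pow_nnnorm_pow_one_div_tendsto_nhds_spectralRadius Q) h2
  have hmem : (-1 : ℂ) ∉ spectrum ℂ Q := by
    intro hmem
    have hle : (‖(-1 : ℂ)‖₊ : ℝ≥0∞) ≤ spectralRadius ℂ Q :=
      le_iSup₂ (f := fun k (_ : k ∈ spectrum ℂ Q) => (‖k‖₊ : ℝ≥0∞)) _ hmem
    rw [hrad] at hle
    simp at hle
  have h4 := spectrum.notMem_iff.mp hmem
  have h5 : algebraMap ℂ (E →L[ℂ] E) (-1) - Q = -(1 + Q) := by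
    rw [map_neg, map_one]; abel
  rw [h5] at h4
  simpa using h4.neg

lemma IsQuasinilpotentOp.neg {E : Type*} [NormedAddCommGroup E] [NormedSpace ℂ E]
    {Q : E →L[ℂ] E} (h : IsQuasinilpotentOp Q) : IsQuasinilpotentOp (-Q) := by
  refine isQuasinilpotentOp_of_norm_le 1 (fun n _ => ?_) h
  rw [one_mul]
  rcases Nat.even_or_odd n with hn | hn
  · rw [hn.neg_pow]
  · rw [hn.neg_pow, norm_neg]

lemma restrict_pow_coe {E : Type*} [NormedAddCommGroup E] [NormedSpace ℂ E] (T : E →L[ℂ] E)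
    {N : Submodule ℂ E} (A : ↥N →L[ℂ] ↥N) (h : ∀ x : N, (A x : E) = T x) :
    ∀ (n : ℕ) (x : N), ((A ^ n) x : E) = (T ^ n) (x : E) := by
  intro n
  induction n with
  | zero => intro x; simp
  | succ n ih =>
    intro x
    rw [pow_succ, pow_succ]
    simp only [ContinuousLinearMap.mul_apply]
    rw [ih (A x), h x]

lemma lem12 {X : Type*} [NormedAddCommGroup X] [NormedSpace ℂ X] [CompleteSpace X]
    (T : X →L[ℂ] X) :
    (∃ S : X →L[ℂ] X, T * S * T = S * T ^ 2 ∧ S ^ 2 * T = S ∧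
        IsQuasinilpotentOp (T * S * T - T)) ↔
      (∃ P : X →L[ℂ] X, P * P = P ∧ T * P = P * T ∧
        (∃ R : X →L[ℂ] X, R * (T + P) = 1) ∧ IsQuasinilpotentOp (T * P)) := by
  constructor
  · rintro ⟨S, h1, h2, h3⟩
    set P := 1 - S * T with hP
    have hSTST : S * T * (S * T) = S * T := by
      calc S * T * (S * T) = S * (T * S * T) := by noncomm_ring
        _ = S * (S * T ^ 2) := by rw [h1]
        _ = S ^ 2 * T * T := by noncomm_ring
        _ = S * T := by rw [h2]
    have hPP : P * P = P := by
      have e : P * P = 1 - S * T - S * T + S * T * (S * T) := by rw [hP]; noncomm_ring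
      rw [e, hSTST, hP]; abel
    have hTP : T * P = P * T := by
      have e1 : T * P = T - T * S * T := by rw [hP]; noncomm_ring
      have e2 : P * T = T - S * T ^ 2 := by rw [hP]; noncomm_ring
      rw [e1, e2, h1]
    have hTPneg : T * P = -(T * S * T - T) := by rw [hP]; noncomm_ring
    have hq : IsQuasinilpotentOp (T * P) := by rw [hTPneg]; exact h3.neg
    have hSP : S * P = 0 := by
      have e : S * P = S - S ^ 2 * T := by rw [hP]; noncomm_ring
      rw [e, h2]; abel
    have hkey : (S + P) * (T + P) = 1 + P * T := by
      have e : (S + P) * (T + P) = S * T + S * P + P * T + P * P := by noncomm_ring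
      rw [e, hSP, hPP, hP]; abel
    have hunit : IsUnit (1 + P * T) := by
      rw [← hTP]; exact isUnit_one_add_of_quasinilpotent _ hq
    refine ⟨P, hPP, hTP, ⟨↑hunit.unit⁻¹ * (S + P), ?_⟩, hq⟩
    rw [mul_assoc, hkey]
    exact hunit.val_inv_mul
  · rintro ⟨P, hPP, hTP, ⟨R, hR⟩, hq⟩
    set S := R * (1 - P) with hS
    have hQQ : (1 - P) * (1 - P) = 1 - P := by
      have e : (1 - P) * (1 - P) = 1 - P - P + P * P := by noncomm_ring
      rw [e, hPP]; abel
    have hTQ : (T + P) * (1 - P) = (1 - P) * T := by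
      have e1 : (T + P) * (1 - P) = T - T * P + P - P * P := by noncomm_ring
      have e2 : (1 - P) * T = T - P * T := by noncomm_ring
      rw [e1, e2, hPP, hTP]; abel
    have hST : S * T = 1 - P := by
      have e : S * T = R * ((1 - P) * T) := by rw [hS]; noncomm_ring
      rw [e, ← hTQ, ← mul_assoc, hR, one_mul]
    have hcomm : T * (1 - P) = (1 - P) * T := by
      have e1 : T * (1 - P) = T - T * P := by noncomm_ring
      have e2 : (1 - P) * T = T - P * T := by noncomm_ring
      rw [e1, e2, hTP]
    have hS2 : S ^ 2 * T = S := by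
      have e : S ^ 2 * T = S * (S * T) := by noncomm_ring
      rw [e, hST, hS, mul_assoc, hQQ]
    have hTST : T * S * T = S * T ^ 2 := by
      have e1 : T * S * T = T * (S * T) := by noncomm_ring
      have e2 : S * T ^ 2 = S * T * T := by noncomm_ring
      rw [e1, e2, hST, hcomm]
    have hqn : IsQuasinilpotentOp (T * S * T - T) := by
      have e : T * S * T - T = -(T * P) := by
        have e1 : T * S * T = T * (S * T) := by noncomm_ring
        rw [e1, hST]; noncomm_ring
      rw [e]; exact hq.neg
    exact ⟨S, hTST, hS2, hqn⟩

lemma lem2_to_3 {X : Type*} [NormedAddCommGroup X] [NormedSpace ℂ X] [CompleteSpace X]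
    (T : X →L[ℂ] X)
    (h : ∃ P : X →L[ℂ] X, P * P = P ∧ T * P = P * T ∧
        (∃ R : X →L[ℂ] X, R * (T + P) = 1) ∧ IsQuasinilpotentOp (T * P)) :
    (∃ M N : Submodule ℂ X, IsClosed (M : Set X) ∧ IsClosed (N : Set X) ∧
        IsCompl M N ∧
        (∃ TM : M →L[ℂ] M, (∀ x : M, (TM x : X) = T x) ∧
          ∃ RM : M →L[ℂ] M, RM * TM = 1) ∧
        (∃ TN : N →L[ℂ] N, (∀ x : N, (TN x : X) = T x) ∧
          IsQuasinilpotentOp TN)) := by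
  obtain ⟨P, hPP, hTP, ⟨R, hR⟩, hq⟩ := h
  have hPapp : ∀ x : X, P (P x) = P x := fun x => by
    simpa [ContinuousLinearMap.mul_apply] using ContinuousLinearMap.ext_iff.mp hPP x
  have hTPapp : ∀ x : X, T (P x) = P (T x) := fun x => by
    simpa [ContinuousLinearMap.mul_apply] using ContinuousLinearMap.ext_iff.mp hTP x
  have hRapp : ∀ x : X, R (T x + P x) = x := fun x => by
    simpa [ContinuousLinearMap.mul_apply, ContinuousLinearMap.add_apply] using
      ContinuousLinearMap.ext_iff.mp hR x
  set M : Submodule ℂ X := LinearMap.ker (P : X →ₗ[ℂ] X) with hMdef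
  set N : Submodule ℂ X := LinearMap.ker ((1 - P : X →L[ℂ] X) : X →ₗ[ℂ] X) with hNdef
  have hmemM : ∀ x : X, x ∈ M ↔ P x = 0 := fun x => LinearMap.mem_ker
  have hmemN : ∀ x : X, x ∈ N ↔ P x = x := fun x => by
    rw [hNdef, LinearMap.mem_ker]
    constructor
    · intro h
      have h' : x - P x = 0 := by
        simpa [ContinuousLinearMap.sub_apply, ContinuousLinearMap.one_apply] using h
      exact (sub_eq_zero.mp h').symm
    · intro h
      simp [ContinuousLinearMap.sub_apply, ContinuousLinearMap.one_apply, h]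
  have hclM : IsClosed (M : Set X) := ContinuousLinearMap.isClosed_ker P
  have hclN : IsClosed (N : Set X) := ContinuousLinearMap.isClosed_ker (1 - P)
  have hcompl : IsCompl M N := by
    constructor
    · rw [disjoint_iff_inf_le]
      intro x hx
      obtain ⟨hx1, hx2⟩ := Submodule.mem_inf.mp hx
      have h1 : P x = 0 := (hmemM x).mp hx1
      have h2 : P x = x := (hmemN x).mp hx2
      rw [Submodule.mem_bot, ← h2, h1]
    · rw [codisjoint_iff, eq_top_iff]
      intro x _
      refine Submodule.mem_sup.mpr ⟨x - P x, ?_, P x, ?_, by abel⟩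
      · exact (hmemM _).mpr (by rw [map_sub, hPapp, sub_self])
      · exact (hmemN _).mpr (hPapp x)
  have hTM_mem : ∀ x : ↥M, T ((x : X)) ∈ M := fun x => by
    have hx : P (x : X) = 0 := (hmemM _).mp x.2
    exact (hmemM _).mpr (by rw [← hTPapp, hx, map_zero])
  have hTN_mem : ∀ x : ↥N, T ((x : X)) ∈ N := fun x => by
    have hx : P (x : X) = (x : X) := (hmemN _).mp x.2
    exact (hmemN _).mpr (by rw [← hTPapp, hx])
  set TM : ↥M →L[ℂ] ↥M := (T.comp M.subtypeL).codRestrict M (fun x => hTM_mem x) with hTMdef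
  set TN : ↥N →L[ℂ] ↥N := (T.comp N.subtypeL).codRestrict N (fun x => hTN_mem x) with hTNdef
  have hTMc : ∀ x : ↥M, (TM x : X) = T x := fun x => rfl
  have hTNc : ∀ x : ↥N, (TN x : X) = T x := fun x => rfl
  have hQmem : ∀ z : X, z - P z ∈ M := fun z =>
    (hmemM _).mpr (by rw [map_sub, hPapp, sub_self])
  set RM : ↥M →L[ℂ] ↥M :=
    (((1 - P).comp R).comp M.subtypeL).codRestrict M (fun x => by
      simpa [ContinuousLinearMap.sub_apply, ContinuousLinearMap.one_apply] using
        hQmem (R (x : X))) with hRMdef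
  have hRMTM : RM * TM = 1 := by
    refine ContinuousLinearMap.ext fun x => Subtype.ext ?_
    have hx : P (x : X) = 0 := (hmemM _).mp x.2
    have h1 : R (T (x : X)) = (x : X) := by
      have := hRapp (x : X); rwa [hx, add_zero] at this
    have h2 : ((((T.comp M.subtypeL).codRestrict M (fun x => hTM_mem x)) x : M) : X) = T x := rfl
    simp [hRMdef, hTMdef, h2, ContinuousLinearMap.mul_apply,
      ContinuousLinearMap.coe_codRestrict_apply, ContinuousLinearMap.comp_apply,
      ContinuousLinearMap.sub_apply, ContinuousLinearMap.one_apply, h1, hx]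
  have hTPpow : ∀ (n : ℕ) (y : X), P y = y → ((T * P) ^ n) y = (T ^ n) y := by
    intro n
    induction n with
    | zero => intro y _; simp
    | succ n ih =>
      intro y hy
      rw [pow_succ, pow_succ]
      simp only [ContinuousLinearMap.mul_apply]
      have hTy : P (T y) = T y := by rw [← hTPapp, hy]
      rw [hy, ih (T y) hTy]
  have hTNq : IsQuasinilpotentOp TN := by
    refine isQuasinilpotentOp_of_norm_le 1 (fun n _ => ?_) hq
    rw [one_mul]
    refine ContinuousLinearMap.opNorm_le_bound _ (norm_nonneg _) fun x => ?_
    have hx : P (x : X) = (x : X) := (hmemN _).mp x.2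
    calc ‖(TN ^ n) x‖ = ‖((T * P) ^ n) (x : X)‖ := by
          rw [show ‖(TN ^ n) x‖ = ‖(((TN ^ n) x : X))‖ from rfl,
            restrict_pow_coe T TN hTNc n x, hTPpow n _ hx]
      _ ≤ ‖(T * P) ^ n‖ * ‖(x : X)‖ := ContinuousLinearMap.le_opNorm _ _
      _ = ‖(T * P) ^ n‖ * ‖x‖ := rfl
  exact ⟨M, N, hclM, hclN, hcompl, ⟨TM, hTMc, RM, hRMTM⟩, ⟨TN, hTNc, hTNq⟩⟩

lemma lem3_to_2 {X : Type*} [NormedAddCommGroup X] [NormedSpace ℂ X] [CompleteSpace X]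
    (T : X →L[ℂ] X)
    (h : ∃ M N : Submodule ℂ X, IsClosed (M : Set X) ∧ IsClosed (N : Set X) ∧
        IsCompl M N ∧
        (∃ TM : M →L[ℂ] M, (∀ x : M, (TM x : X) = T x) ∧
          ∃ RM : M →L[ℂ] M, RM * TM = 1) ∧
        (∃ TN : N →L[ℂ] N, (∀ x : N, (TN x : X) = T x) ∧
          IsQuasinilpotentOp TN)) :
    (∃ P : X →L[ℂ] X, P * P = P ∧ T * P = P * T ∧
        (∃ R : X →L[ℂ] X, R * (T + P) = 1) ∧ IsQuasinilpotentOp (T * P)) := by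
  obtain ⟨M, N, hM, hN, hc, ⟨TM, hTMc, RM, hRM⟩, ⟨TN, hTNc, hTNq⟩⟩ := h
  haveI : CompleteSpace M := hM.completeSpace_coe
  haveI : CompleteSpace N := hN.completeSpace_coe
  set projM : X →L[ℂ] M := M.linearProjOfClosedCompl N hc hM hN with hprojMdef
  set projN : X →L[ℂ] N := N.linearProjOfClosedCompl M hc.symm hN hM with hprojNdef
  have hprojM_left : ∀ y : ↥M, projM (y : X) = y := fun y => by
    simp only [hprojMdef, Submodule.coe_continuous_linearProjOfClosedCompl']
    exact Submodule.linearProjOfIsCompl_apply_left hc y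
  have hprojN_left : ∀ y : ↥N, projN (y : X) = y := fun y => by
    simp only [hprojNdef, Submodule.coe_continuous_linearProjOfClosedCompl']
    exact Submodule.linearProjOfIsCompl_apply_left hc.symm y
  have hprojM_right : ∀ y : X, y ∈ N → projM y = 0 := fun y hy => by
    simp only [hprojMdef, Submodule.coe_continuous_linearProjOfClosedCompl']
    exact Submodule.linearProjOfIsCompl_apply_right' hc hy
  have hprojN_right : ∀ y : X, y ∈ M → projN y = 0 := fun y hy => by
    simp only [hprojNdef, Submodule.coe_continuous_linearProjOfClosedCompl']
    exact Submodule.linearProjOfIsCompl_apply_right' hc.symm hy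
  have hdecomp : ∀ x : X, ((projM x : X)) + ((projN x : X)) = x := fun x => by
    simp only [hprojMdef, hprojNdef, Submodule.coe_continuous_linearProjOfClosedCompl']
    exact Submodule.projection_add_projection_eq_self hc x
  have hTMmem : ∀ y : X, y ∈ M → T y ∈ M := fun y hy => by
    rw [← hTMc ⟨y, hy⟩]; exact (TM ⟨y, hy⟩).2
  have hTNmem : ∀ y : X, y ∈ N → T y ∈ N := fun y hy => by
    rw [← hTNc ⟨y, hy⟩]; exact (TN ⟨y, hy⟩).2
  set P : X →L[ℂ] X := N.subtypeL.comp projN with hPdef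
  have hPapp : ∀ x : X, P x = ((projN x : X)) := fun x => rfl
  have hPP : P * P = P := by
    refine ContinuousLinearMap.ext fun x => ?_
    rw [ContinuousLinearMap.mul_apply, hPapp, hPapp, hprojN_left]
  have hprojN_T : ∀ x : X, ((projN (T x) : X)) = T ((projN x : X)) := by
    intro x
    have e : T x = T ((projM x : X)) + T ((projN x : X)) := by rw [← map_add, hdecomp]
    have h1 : projN (T ((projM x : X))) = 0 := hprojN_right _ (hTMmem _ (projM x).2)
    have h2 : projN (T ((projN x : X))) = ⟨T ((projN x : X)), hTNmem _ (projN x).2⟩ :=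
      hprojN_left ⟨_, hTNmem _ (projN x).2⟩
    rw [e, map_add, h1, h2, zero_add]
  have hTP : T * P = P * T := by
    refine ContinuousLinearMap.ext fun x => ?_
    rw [ContinuousLinearMap.mul_apply, ContinuousLinearMap.mul_apply, hPapp, hPapp]
    exact (hprojN_T x).symm
  -- quasinilpotence of T * P
  have hpow : ∀ n : ℕ, 1 ≤ n → ∀ x : X, ((T * P) ^ n) x = ((TN ^ n) (projN x) : X) := by
    intro n hn
    induction n, hn using Nat.le_induction with
    | base =>
      intro x
      rw [pow_one, pow_one, ContinuousLinearMap.mul_apply, hPapp, hTNc]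
    | succ n hn ih =>
      intro x
      rw [pow_succ, pow_succ]
      simp only [ContinuousLinearMap.mul_apply]
      have e1 : T (P x) = ((TN (projN x) : X)) := by
        rw [hPapp, hTNc]
      rw [e1, ih, hprojN_left]
  have hTPq : IsQuasinilpotentOp (T * P) := by
    refine isQuasinilpotentOp_of_norm_le ‖projN‖ (fun n hn => ?_) hTNq
    refine ContinuousLinearMap.opNorm_le_bound _ (by positivity) fun x => ?_
    calc ‖((T * P) ^ n) x‖ = ‖(TN ^ n) (projN x)‖ := by rw [hpow n hn x]; rfl
      _ ≤ ‖TN ^ n‖ * ‖projN x‖ := ContinuousLinearMap.le_opNorm _ _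
      _ ≤ ‖TN ^ n‖ * (‖projN‖ * ‖x‖) :=
          mul_le_mul_of_nonneg_left (ContinuousLinearMap.le_opNorm _ _)
            (ContinuousLinearMap.opNorm_nonneg _)
      _ = ‖projN‖ * ‖TN ^ n‖ * ‖x‖ := by ring
  -- left inverse of T + P
  have hinv : IsUnit ((1 : ↥N →L[ℂ] ↥N) + TN) := isUnit_one_add_of_quasinilpotent TN hTNq
  set V : ↥N →L[ℂ] ↥N := ↑hinv.unit⁻¹ with hVdef
  have hVapp : ∀ z : ↥N, V (((1 : ↥N →L[ℂ] ↥N) + TN) z) = z := fun z => by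
    have := ContinuousLinearMap.ext_iff.mp hinv.val_inv_mul z
    simpa only [ContinuousLinearMap.mul_apply, ContinuousLinearMap.one_apply] using this
  set R : X →L[ℂ] X := M.subtypeL.comp (RM.comp projM) + N.subtypeL.comp (V.comp projN)
    with hRdef
  have hRTP : R * (T + P) = 1 := by
    refine ContinuousLinearMap.ext fun x => ?_
    rw [ContinuousLinearMap.mul_apply, ContinuousLinearMap.one_apply]
    have hy : (T + P) x = T ((projM x : X)) + (((1 + TN) (projN x) : X)) := by
      have e0 : (T + P) x = T x + ((projN x : X)) := by
        rw [ContinuousLinearMap.add_apply, hPapp]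
      rw [e0, show T x = T ((projM x : X)) + T ((projN x : X)) by rw [← map_add, hdecomp]]
      have e1 : (((1 + TN) (projN x) : X)) = ((projN x : X)) + T ((projN x : X)) := by
        rw [ContinuousLinearMap.add_apply, ContinuousLinearMap.one_apply,
          Submodule.coe_add, hTNc]
      rw [e1]; abel
    have hpM : projM ((T + P) x) = TM (projM x) := by
      rw [hy, map_add]
      have h1 : projM (T ((projM x : X))) = TM (projM x) := by
        rw [show T ((projM x : X)) = ((TM (projM x) : X)) from (hTMc _).symm]
        exact hprojM_left _
      have h2 : projM (((1 + TN) (projN x) : X)) = 0 :=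
        hprojM_right _ ((1 + TN) (projN x)).2
      rw [h1, h2, add_zero]
    have hpN : projN ((T + P) x) = (1 + TN) (projN x) := by
      rw [hy, map_add]
      have h1 : projN (T ((projM x : X))) = 0 := hprojN_right _ (hTMmem _ (projM x).2)
      have h2 : projN (((1 + TN) (projN x) : X)) = (1 + TN) (projN x) := hprojN_left _
      rw [h1, h2, zero_add]
    have hRMapp : RM (TM (projM x)) = projM x := by
      have := ContinuousLinearMap.ext_iff.mp hRM (projM x)
      simpa [ContinuousLinearMap.mul_apply] using this
    have : R ((T + P) x) =
        ((RM (projM ((T + P) x)) : X)) + ((V (projN ((T + P) x)) : X)) := by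
      rw [hRdef]
      simp only [ContinuousLinearMap.add_apply, ContinuousLinearMap.comp_apply,
        Submodule.subtypeL_apply]
    rw [this, hpM, hpN, hRMapp, hVapp]
    exact hdecomp x
  exact ⟨P, hPP, hTP, ⟨R, hRTP⟩, hTPq⟩

/-- Theorem 3.7: for `T ∈ B(X)` the following are equivalent:
(i) there is `S` with `TST = ST²`, `S²T = S` and `TST - T` quasi-nilpotent
(i.e. `T` is left generalized Drazin invertible);
(ii) there is a projection `P` commuting with `T` such that `T + P` is left
invertible and `TP` is quasi-nilpotent;
(iii) there are closed subspaces `M`, `N` reducing `T` with `T|_M` left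
invertible and `T|_N` quasi-nilpotent. -/

theorem left_generalized_drazin_operator_iff {X : Type*}
    [NormedAddCommGroup X] [NormedSpace ℂ X] [CompleteSpace X] (T : X →L[ℂ] X) :
    ((∃ S : X →L[ℂ] X, T * S * T = S * T ^ 2 ∧ S ^ 2 * T = S ∧
        IsQuasinilpotentOp (T * S * T - T)) ↔
      (∃ P : X →L[ℂ] X, P * P = P ∧ T * P = P * T ∧
        (∃ R : X →L[ℂ] X, R * (T + P) = 1) ∧ IsQuasinilpotentOp (T * P))) ∧
    ((∃ S : X →L[ℂ] X, T * S * T = S * T ^ 2 ∧ S ^ 2 * T = S ∧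
        IsQuasinilpotentOp (T * S * T - T)) ↔
      (∃ M N : Submodule ℂ X, IsClosed (M : Set X) ∧ IsClosed (N : Set X) ∧
        IsCompl M N ∧
        (∃ TM : M →L[ℂ] M, (∀ x : M, (TM x : X) = T x) ∧
          ∃ RM : M →L[ℂ] M, RM * TM = 1) ∧
        (∃ TN : N →L[ℂ] N, (∀ x : N, (TN x : X) = T x) ∧
          IsQuasinilpotentOp TN))) :=
  ⟨lem12 T, (lem12 T).trans ⟨lem2_to_3 T, lem3_to_2 T⟩⟩
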